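/- arXiv:2003.07530 — 3 statements merged into one kernel-verified Lean document; each statement's English description precedes it below -/
import Mathlib

section
/- For all nonnegative integers r, s and every complex number c such that (c−r)_k ≠ 0 for 0 ≤ k ≤ min(r,s) and (c−r)_s ≠ 0, one has Σ_{k=0}^{min(r,s)} C(r,k) · C(s,k) · k! / (c−r)_k = (c)_s / (c−r)_s. -/
/-- The Pochhammer symbol (rising factorial) `(a)ₖ = a(a+1)⋯(a+k−1)`. -/
noncomputable def poch (a : ℂ) (k : ℕ) : ℂ := (ascPochhammer ℂ k).eval a

lemma poch_zero (a : ℂ) : poch a 0 = 1 := by simp [poch]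

lemma poch_succ (a : ℂ) (n : ℕ) : poch a (n + 1) = a * poch (a + 1) n := by
  unfold poch
  rw [ascPochhammer_succ_left, Polynomial.eval_mul, Polynomial.eval_comp]
  simp

lemma poch_succ' (a : ℂ) (n : ℕ) : poch a (n + 1) = poch a n * (a + n) := by
  unfold poch
  rw [ascPochhammer_succ_eval]

lemma poch_add (x : ℂ) (m n : ℕ) : poch x (m + n) = poch x m * poch (x + m) n := by
  unfold poch
  rw [← ascPochhammer_mul, Polynomial.eval_mul, Polynomial.eval_comp]
  simp

lemma key : ∀ (r s : ℕ) (x : ℂ),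
    ∑ k ∈ Finset.range (s + 1),
      (r.choose k : ℂ) * (s.choose k : ℂ) * (k.factorial : ℂ) * poch (x + k) (s - k)
    = poch (x + r) s := by
  intro r
  induction r with
  | zero =>
    intro s x
    rw [Finset.sum_eq_single 0]
    · simp
    · intro k _ hk
      rw [Nat.choose_eq_zero_of_lt (Nat.pos_of_ne_zero hk)]
      simp
    · intro h; simp at h
  | succ r ih =>
    intro s x
    cases s with
    | zero => simp [poch_zero]
    | succ t =>
      rw [Finset.sum_range_succ']
      have hsplit : ∀ j ∈ Finset.range (t + 1),
          ((r+1).choose (j+1) : ℂ) * ((t+1).choose (j+1) : ℂ) * ((j+1).factorial : ℂ) *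
            poch (x + ((j+1 : ℕ) : ℂ)) (t + 1 - (j+1))
          = ((r.choose (j+1) : ℂ) * ((t+1).choose (j+1) : ℂ) * ((j+1).factorial : ℂ) *
              poch (x + ((j+1 : ℕ) : ℂ)) (t + 1 - (j+1)))
            + ((t+1) : ℂ) * ((r.choose j : ℂ) * (t.choose j : ℂ) * (j.factorial : ℂ) *
              poch ((x+1) + j) (t - j)) := by
        intro j hj
        have hch : (r+1).choose (j+1) = r.choose (j+1) + r.choose j :=
          Nat.choose_succ_succ' r j ▸ by ring
        have hfac : ((t+1).choose (j+1) : ℂ) * ((j+1).factorial : ℂ) =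
            (t+1) * ((t.choose j : ℂ) * (j.factorial : ℂ)) := by
          have h := Nat.add_one_mul_choose_eq t j
          have : ((t+1).choose (j+1)) * ((j+1).factorial) =
              (t+1) * (t.choose j * j.factorial) := by
            rw [Nat.factorial_succ, ← mul_assoc, ← h]
            ring
          exact_mod_cast this
        have harg : x + ((j+1 : ℕ) : ℂ) = (x + 1) + j := by push_cast; ring
        have hsub : t + 1 - (j + 1) = t - j := by omega
        rw [hch, harg, hsub]
        push_cast
        linear_combination ((r.choose j : ℂ) * poch ((x+1) + j) (t - j)) * hfac
      rw [Finset.sum_congr rfl hsplit, Finset.sum_add_distrib, ← Finset.mul_sum, ih t (x+1)]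
      have hB := ih (t+1) x
      rw [Finset.sum_range_succ'] at hB
      have harg2 : x + ((r+1 : ℕ) : ℂ) = (x + r) + 1 := by push_cast; ring
      rw [harg2]
      have h1 : poch (x + r) (t+1) = (x + r) * poch ((x + r) + 1) t := poch_succ _ _
      have h2 : poch ((x + r) + 1) (t+1) = poch ((x + r) + 1) t * ((x + r) + 1 + t) :=
        poch_succ' _ _
      have h3 : (x + 1) + (r : ℂ) = (x + r) + 1 := by ring
      rw [h1] at hB
      rw [h3, h2]
      push_cast [Nat.choose_zero_right, Nat.factorial_zero] at hB ⊢
      linear_combination hB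

theorem finite_sum_denominator_param (r s : ℕ) (c : ℂ)
    (hc : ∀ k ≤ min r s, poch (c - r) k ≠ 0) (hcs : poch (c - r) s ≠ 0) :
    ∑ k ∈ Finset.range (min r s + 1),
      (r.choose k : ℂ) * (s.choose k : ℂ) * (k.factorial : ℂ) / poch (c - r) k =
    poch c s / poch (c - r) s := by
  set x : ℂ := c - r with hx
  have hk : ∀ k, k ≤ s → poch x k ≠ 0 := by
    intro k hks h0
    apply hcs
    have := poch_add x k (s - k)
    rw [Nat.add_sub_cancel' hks] at this
    rw [this, h0, zero_mul]
  rw [eq_div_iff hcs, Finset.sum_mul]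
  have hterm : ∀ k ∈ Finset.range (min r s + 1),
      (r.choose k : ℂ) * (s.choose k : ℂ) * (k.factorial : ℂ) / poch x k * poch x s
      = (r.choose k : ℂ) * (s.choose k : ℂ) * (k.factorial : ℂ) * poch (x + k) (s - k) := by
    intro k hkmem
    have hks : k ≤ s := by
      have := Finset.mem_range.mp hkmem
      omega
    have hdecomp : poch x s = poch x k * poch (x + k) (s - k) := by
      have := poch_add x k (s - k)
      rwa [Nat.add_sub_cancel' hks] at this
    rw [hdecomp]
    field_simp [hk k hks]
  rw [Finset.sum_congr rfl hterm]
  have hext : ∑ k ∈ Finset.range (min r s + 1),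
      (r.choose k : ℂ) * (s.choose k : ℂ) * (k.factorial : ℂ) * poch (x + k) (s - k)
      = ∑ k ∈ Finset.range (s + 1),
      (r.choose k : ℂ) * (s.choose k : ℂ) * (k.factorial : ℂ) * poch (x + k) (s - k) := by
    apply Finset.sum_subset
    · intro k hkmem
      simp only [Finset.mem_range] at *
      omega
    · intro k hk1 hk2
      simp only [Finset.mem_range] at *
      have : r < k := by omega
      rw [Nat.choose_eq_zero_of_lt this]
      simp
  rw [hext, key r s x]
  congr 1
  rw [hx]
  ring
end

section
/- As an identity of formal power series in x: for every nonnegative integer r and complex parameters a, b, c with c and c−r not nonpositive integers, Σ_{k=0}^{r} C(r,k) · ((a)_k (b)_k/((c−r)_k (c)_k)) · x^k · 2F1(a+k, b+k; c+k; x) = 2F1(a, b; c−r; x). -/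
/-- The Gauss hypergeometric series `₂F₁(a,b;c;x)` as a formal power series. -/
noncomputable def gauss2F1 (a b c : ℂ) : PowerSeries ℂ :=
  PowerSeries.mk fun s => poch a s * poch b s / (poch c s * (s.factorial : ℂ))

lemma poch_mul (x : ℂ) (k m : ℕ) : poch x k * poch (x + k) m = poch x (k + m) := by
  have := congrArg (Polynomial.eval x) (ascPochhammer_mul ℂ k m)
  simpa [poch, Polynomial.eval_comp] using this

lemma poch_ne_zero {x : ℂ} (h : ∀ n : ℕ, x ≠ -n) (k : ℕ) : poch x k ≠ 0 := by
  rw [poch, ne_eq, ascPochhammer_eval_eq_zero_iff]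
  rintro ⟨j, _, hj⟩
  exact h j (by linear_combination hj)

/-- Vandermonde-type identity:
`∑ k, C(r,k) · x^(falling k) · (y+k)^(rising (r-k)) = (x+y)^(rising r)`. -/
lemma vandermonde (r : ℕ) (x y : ℂ) :
    ∑ k ∈ Finset.range (r + 1), (r.choose k : ℂ) *
        (descPochhammer ℂ k).eval x * (ascPochhammer ℂ (r - k)).eval (y + k) =
      (ascPochhammer ℂ r).eval (x + y) := by
  induction r generalizing x y with
  | zero => simp
  | succ r ih =>
    have h1 : ∀ k ∈ Finset.range (r + 1 + 1), (((r + 1).choose k : ℕ) : ℂ) *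
        (descPochhammer ℂ k).eval x * (ascPochhammer ℂ (r + 1 - k)).eval (y + k)
        = ((r.choose k : ℂ) * (descPochhammer ℂ k).eval x *
            (ascPochhammer ℂ (r + 1 - k)).eval (y + k)) +
          ((r.choose (k - 1) : ℂ) * (if k = 0 then 0 else 1) * (descPochhammer ℂ k).eval x *
            (ascPochhammer ℂ (r + 1 - k)).eval (y + k)) := by
      intro k _
      rcases k with _ | k
      · simp
      · rw [Nat.choose_succ_succ' r k]
        push_cast
        simp
        ring
    rw [Finset.sum_congr rfl h1, Finset.sum_add_distrib]
    have h2 : ∑ k ∈ Finset.range (r + 1 + 1), (r.choose k : ℂ) *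
        (descPochhammer ℂ k).eval x * (ascPochhammer ℂ (r + 1 - k)).eval (y + k)
        = (y + r) * ∑ k ∈ Finset.range (r + 1), (r.choose k : ℂ) *
            (descPochhammer ℂ k).eval x * (ascPochhammer ℂ (r - k)).eval (y + k) := by
      rw [Finset.sum_range_succ, Nat.choose_succ_self, Finset.mul_sum]
      push_cast
      rw [zero_mul, zero_mul, add_zero]
      refine Finset.sum_congr rfl fun k hk => ?_
      have hk' : k ≤ r := Nat.lt_succ_iff.mp (Finset.mem_range.mp hk)
      have : r + 1 - k = (r - k) + 1 := by omega
      rw [this, ascPochhammer_succ_eval]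
      have : ((r - k : ℕ) : ℂ) = (r : ℂ) - k := by
        push_cast [Nat.cast_sub hk']; ring
      rw [this]
      ring
    have h3 : ∑ k ∈ Finset.range (r + 1 + 1), (r.choose (k - 1) : ℂ) * (if k = 0 then 0 else 1) *
        (descPochhammer ℂ k).eval x * (ascPochhammer ℂ (r + 1 - k)).eval (y + k)
        = x * ∑ k ∈ Finset.range (r + 1), (r.choose k : ℂ) *
            (descPochhammer ℂ k).eval (x - 1) * (ascPochhammer ℂ (r - k)).eval ((y + 1) + k) := by
      rw [Finset.sum_range_succ']
      simp only [Nat.succ_ne_zero, if_false, if_true, Nat.add_sub_cancel, mul_zero, zero_mul,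
        mul_one, add_zero, ite_false, ite_true, reduceIte]
      rw [Finset.mul_sum]
      refine Finset.sum_congr rfl fun k hk => ?_
      have hd : (descPochhammer ℂ (k + 1)).eval x = x * (descPochhammer ℂ k).eval (x - 1) := by
        rw [descPochhammer_succ_left]
        simp [Polynomial.eval_comp]
      have h4 : r + 1 - (k + 1) = r - k := by omega
      have h5 : y + ((k : ℂ) + 1) = (y + 1) + k := by ring
      push_cast
      rw [hd, h5]
      try rw [h4]
      ring
    rw [h2, h3, ih x y, ih (x - 1) (y + 1)]
    have : x - 1 + (y + 1) = x + y := by ring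
    rw [this, ascPochhammer_succ_eval]
    ring

theorem finite_sum_2F1_denominator (r : ℕ) (a b c : ℂ)
    (hc : ∀ n : ℕ, c ≠ -(n : ℂ)) (hcr : ∀ n : ℕ, c - r ≠ -(n : ℂ)) :
    ∑ k ∈ Finset.range (r + 1),
      PowerSeries.C ((r.choose k : ℂ) * (poch a k * poch b k) /
          (poch (c - r) k * poch c k)) *
        (PowerSeries.X : PowerSeries ℂ) ^ k * gauss2F1 (a + k) (b + k) (c + k) =
    gauss2F1 a b (c - r) := by
  set d := c - r with hd
  have hdr : d + r = c := by rw [hd]; ring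
  clear_value d
  have hck : ∀ k : ℕ, ∀ n : ℕ, c + k ≠ -(n : ℂ) := by
    intro k n h
    apply hc (n + k)
    push_cast
    linear_combination h
  ext n
  rw [map_sum]
  conv_rhs => rw [gauss2F1, PowerSeries.coeff_mk]
  -- rewrite each summand's coefficient
  have hco : ∀ k ∈ Finset.range (r + 1),
      (PowerSeries.coeff n) (PowerSeries.C ((r.choose k : ℂ) * (poch a k * poch b k) /
          (poch d k * poch c k)) * (PowerSeries.X : PowerSeries ℂ) ^ k *
          gauss2F1 (a + k) (b + k) (c + k))
      = (poch a n * poch b n / (poch c n * poch d r * (n.factorial : ℂ))) *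
          ((r.choose k : ℂ) * (descPochhammer ℂ k).eval (n : ℂ) *
            (ascPochhammer ℂ (r - k)).eval (d + k)) := by
    intro k hk
    have hkr : k ≤ r := Nat.lt_succ_iff.mp (Finset.mem_range.mp hk)
    have e1 : PowerSeries.C ((r.choose k : ℂ) * (poch a k * poch b k) /
          (poch d k * poch c k)) * (PowerSeries.X : PowerSeries ℂ) ^ k *
          gauss2F1 (a + k) (b + k) (c + k)
        = (PowerSeries.C ((r.choose k : ℂ) * (poch a k * poch b k) /
          (poch d k * poch c k)) * gauss2F1 (a + k) (b + k) (c + k)) *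
          (PowerSeries.X : PowerSeries ℂ) ^ k := by ring
    rw [e1, PowerSeries.coeff_mul_X_pow', PowerSeries.coeff_C_mul]
    by_cases hkn : k ≤ n
    · rw [if_pos hkn]
      rw [gauss2F1, PowerSeries.coeff_mk]
      -- all ingredients
      have hda := poch_mul a k (n - k)
      have hdb := poch_mul b k (n - k)
      have hdc := poch_mul c k (n - k)
      have hdd := poch_mul d k (r - k)
      rw [Nat.add_sub_cancel' hkn] at hda hdb hdc
      rw [Nat.add_sub_cancel' hkr] at hdd
      have hdesc : (descPochhammer ℂ k).eval (n : ℂ) =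
          (n.factorial : ℂ) / ((n - k).factorial : ℂ) := by
        rw [descPochhammer_eval_eq_descFactorial, Nat.descFactorial_eq_div hkn]
        rw [Nat.cast_div (Nat.factorial_dvd_factorial (Nat.sub_le n k))
          (Nat.cast_ne_zero.mpr (Nat.factorial_ne_zero _))]
      have hpk : (ascPochhammer ℂ (r - k)).eval (d + k) = poch (d + k) (r - k) := rfl
      have hnck : poch c k ≠ 0 := poch_ne_zero hc k
      have hncn : poch c n ≠ 0 := poch_ne_zero hc n
      have hnc2 : poch (c + k) (n - k) ≠ 0 := poch_ne_zero (hck k) (n - k)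
      have hndk : poch d k ≠ 0 := poch_ne_zero hcr k
      have hndr : poch d r ≠ 0 := poch_ne_zero hcr r
      have hf1 : ((n - k).factorial : ℂ) ≠ 0 := Nat.cast_ne_zero.mpr (Nat.factorial_ne_zero _)
      have hf2 : ((n).factorial : ℂ) ≠ 0 := Nat.cast_ne_zero.mpr (Nat.factorial_ne_zero _)
      have hnd2 : poch (d + k) (r - k) ≠ 0 := by
        intro h; apply hndr; rw [← hdd, h, mul_zero]
      have hnd2' : poch ((k : ℂ) + d) (r - k) ≠ 0 := by rwa [add_comm]
      have hnc2' : poch ((k : ℂ) + c) (n - k) ≠ 0 := by rwa [add_comm]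
      have hnum : (r.choose k : ℂ) * (poch a k * poch b k) *
          (poch (a + k) (n - k) * poch (b + k) (n - k))
          = (r.choose k : ℂ) * (poch a n * poch b n) := by
        rw [← hda, ← hdb]; ring
      have hden : (poch d k * poch c k) *
          (poch (c + k) (n - k) * ((n - k).factorial : ℂ))
          = poch d k * poch c n * ((n - k).factorial : ℂ) := by
        rw [← hdc]; ring
      rw [hpk, hdesc, div_mul_div_comm, hnum, hden]
      rw [show (r.choose k : ℂ) * ((n.factorial : ℂ) / ((n - k).factorial : ℂ)) *
            poch (d + k) (r - k)
          = ((r.choose k : ℂ) * (n.factorial : ℂ) * poch (d + k) (r - k)) /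
            ((n - k).factorial : ℂ) by rw [← mul_div_assoc, div_mul_eq_mul_div]]
      rw [div_mul_div_comm, div_eq_div_iff
        (mul_ne_zero (mul_ne_zero hndk hncn) hf1)
        (mul_ne_zero (mul_ne_zero (mul_ne_zero hncn hndr) hf2) hf1)]
      have hfact : (n.factorial : ℂ) = ((n - k).factorial : ℂ) * ((n.factorial : ℂ) /
          ((n - k).factorial : ℂ)) := by field_simp
      linear_combination (-((r.choose k : ℂ) * poch a n * poch b n * poch c n *
        (n.factorial : ℂ) * ((n - k).factorial : ℂ))) * hdd
    · rw [if_neg hkn]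
      have : (descPochhammer ℂ k).eval (n : ℂ) = ((n.descFactorial k : ℕ) : ℂ) :=
        descPochhammer_eval_eq_descFactorial ℂ n k
      rw [this, Nat.descFactorial_eq_zero_iff_lt.mpr (Nat.lt_of_not_le hkn)]
      simp
  rw [Finset.sum_congr rfl hco, ← Finset.mul_sum, vandermonde r (n : ℂ) d]
  have hkey : poch d n * poch (d + (n : ℂ)) r = poch d r * poch c n := by
    have e1 := poch_mul d n r
    have e2 := poch_mul d r n
    rw [hdr] at e2
    rw [Nat.add_comm n r] at e1
    linear_combination e1 - e2
  have h1 : (ascPochhammer ℂ r).eval ((n : ℂ) + d) = poch (d + (n : ℂ)) r := by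
    rw [add_comm]; rfl
  rw [h1]
  have hncn : poch c n ≠ 0 := poch_ne_zero hc n
  have hndr : poch d r ≠ 0 := poch_ne_zero hcr r
  have hndn : poch d n ≠ 0 := poch_ne_zero hcr n
  have hf : ((n).factorial : ℂ) ≠ 0 := Nat.cast_ne_zero.mpr (Nat.factorial_ne_zero _)
  field_simp
  linear_combination poch a n * poch b n * hkey
end

section
/- For every integer r ≥ 1 and every nonnegative integer s, one has Σ_{k=0}^{r} (−r)_k (1+k)_s / ((1−2r)_k · s!) = 2 · (1+2r)_s / (1+r)_s, where (−r)_k/(1−2r)_k is interpreted as the product Π_{j=0}^{k−1} (−r+j)/(1−2r+j), which is well defined for 0 ≤ k ≤ r. -/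
open Finset

/-- Hockey stick identity. -/
lemma hockey_aux (m : ℕ) : ∀ n : ℕ, ∑ j ∈ range (n + 1), (m + j).choose j = (m + n + 1).choose n
  | 0 => by simp
  | n + 1 => by
    rw [Finset.sum_range_succ, hockey_aux m n]
    have h : m + (n + 1) + 1 = (m + n + 1) + 1 := by ring
    rw [h, Nat.choose_succ_succ']
    congr 2

/-- Double Vandermonde-type identity. -/
lemma vand_aux : ∀ s n m : ℕ,
    ∑ k ∈ range (n + 1), (s + k).choose k * (m + (n - k)).choose (n - k)
      = (s + m + n + 1).choose n
  | 0, n, m => by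
    simp only [Nat.zero_add, Nat.choose_self, one_mul]
    calc ∑ k ∈ range (n + 1), (m + (n - k)).choose (n - k)
        = ∑ j ∈ range (n + 1), (m + (n + 1 - 1 - j)).choose (n + 1 - 1 - j) := by
          apply Finset.sum_congr rfl
          intro j hj
          congr 1 <;> omega
      _ = ∑ j ∈ range (n + 1), (m + j).choose j :=
          Finset.sum_range_reflect (fun j => (m + j).choose j) (n + 1)
      _ = (m + n + 1).choose n := hockey_aux m n
  | s + 1, 0, m => by simp
  | s + 1, n + 1, m => by
    have key : ∀ i : ℕ,
        (s + 1 + (i + 1)).choose (i + 1) * (m + (n + 1 - (i + 1))).choose (n + 1 - (i + 1))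
        = (s + 1 + i).choose i * (m + (n - i)).choose (n - i)
          + (s + (i + 1)).choose (i + 1) * (m + (n - i)).choose (n - i) := by
      intro i
      have h2 : n + 1 - (i + 1) = n - i := by omega
      have h3 : s + (i + 1) = s + 1 + i := by omega
      rw [h2, h3]
      rw [show s + 1 + (i + 1) = (s + 1 + i) + 1 by omega, Nat.choose_succ_succ', add_mul]
    have h4 : ∑ k ∈ range (n + 1 + 1), (s + k).choose k * (m + (n + 1 - k)).choose (n + 1 - k)
        = ∑ i ∈ range (n + 1), (s + (i + 1)).choose (i + 1) * (m + (n - i)).choose (n - i)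
          + (s + 1 + 0).choose 0 * (m + (n + 1 - 0)).choose (n + 1 - 0) := by
      rw [Finset.sum_range_succ' _ (n + 1)]
      congr 1
      · apply Finset.sum_congr rfl
        intro i _
        congr 2 <;> omega
      · simp
    rw [Finset.sum_range_succ' _ (n + 1),
      Finset.sum_congr rfl (fun i _ => key i), Finset.sum_add_distrib,
      vand_aux (s + 1) n m, add_assoc, ← h4, vand_aux s (n + 1) m]
    have e1 : s + 1 + m + n + 1 = s + m + n + 2 := by omega
    have e2 : s + m + (n + 1) + 1 = s + m + n + 2 := by omega
    have e3 : s + 1 + m + (n + 1) + 1 = (s + m + n + 2) + 1 := by omega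
    rw [e1, e2]
    conv_rhs => rw [e3, Nat.choose_succ_succ']
termination_by s n m => (s, n)

lemma prod_ratio_eq (r : ℕ) (hr : 1 ≤ r) : ∀ k : ℕ, k ≤ r →
    ∏ j ∈ range k, ((-(r : ℂ) + j) / (1 - 2 * r + j))
      = (r.descFactorial k : ℂ) / ((2 * r - 1).descFactorial k : ℂ)
  | 0, _ => by simp
  | k + 1, hk => by
    rw [Finset.prod_range_succ, prod_ratio_eq r hr k (by omega)]
    have h1 : (-(r : ℂ) + k) = -((r - k : ℕ) : ℂ) := by
      have : ((r - k : ℕ) : ℂ) = (r : ℂ) - k := by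
        push_cast [Nat.cast_sub (by omega : k ≤ r)]; ring
      rw [this]; ring
    have h2 : (1 - 2 * (r : ℂ) + k) = -((2 * r - 1 - k : ℕ) : ℂ) := by
      have : ((2 * r - 1 - k : ℕ) : ℂ) = 2 * (r : ℂ) - 1 - k := by
        push_cast [Nat.cast_sub (by omega : k ≤ 2 * r - 1), Nat.cast_sub (by omega : 1 ≤ 2 * r)]
        ring
      rw [this]; ring
    rw [h1, h2, Nat.descFactorial_succ, Nat.descFactorial_succ]
    push_cast
    rw [neg_div_neg_eq, div_mul_div_comm]
    ring

set_option maxHeartbeats 1000000 in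
theorem finite_sum_ratio_one_minus_two_r (r s : ℕ) (hr : 1 ≤ r) :
    ∑ k ∈ Finset.range (r + 1),
      (∏ j ∈ Finset.range k, ((-(r : ℂ) + j) / (1 - 2 * r + j))) *
        poch (1 + k) s / (s.factorial : ℂ) =
    2 * (poch (1 + 2 * r) s / poch (1 + r) s) := by
  have fne : ∀ n : ℕ, ((n.factorial : ℂ)) ≠ 0 := fun n =>
    Nat.cast_ne_zero.mpr (Nat.factorial_ne_zero n)
  -- poch at natural number arguments
  have hpoch : ∀ n : ℕ, poch (1 + (n : ℂ)) s = ((n + s).factorial : ℂ) / (n.factorial : ℂ) := by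
    intro n
    have h1 : (1 : ℂ) + (n : ℂ) = ((n + 1 : ℕ) : ℂ) := by push_cast; ring
    have h2 : poch (1 + (n : ℂ)) s = (((n + 1).ascFactorial s : ℕ) : ℂ) := by
      rw [poch, h1, ← ascPochhammer_eval_cast, ascPochhammer_nat_eq_ascFactorial]
    have h3 : n.factorial * (n + 1).ascFactorial s = (n + s).factorial :=
      Nat.factorial_mul_ascFactorial n s
    rw [h2, eq_div_iff (fne n)]
    rw [← Nat.cast_mul, mul_comm, ← h3, Nat.cast_mul, mul_comm]
  -- per-term identity
  have hterm : ∀ k ∈ range (r + 1),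
      (∏ j ∈ range k, ((-(r : ℂ) + j) / (1 - 2 * r + j))) * poch (1 + k) s / (s.factorial : ℂ)
        = ((s + k).choose k * (((r - 1) + (r - k)).choose (r - k)) : ℕ) *
            ((r.factorial : ℂ) * ((r - 1).factorial : ℂ) / ((2 * r - 1).factorial : ℂ)) := by
    intro k hk
    have hkr : k ≤ r := by simpa using Nat.lt_succ_iff.mp (Finset.mem_range.mp hk)
    rw [prod_ratio_eq r hr k hkr, hpoch k]
    have hX : (r.descFactorial k : ℂ) = (r.factorial : ℂ) / ((r - k).factorial : ℂ) := by
      rw [eq_div_iff (fne _), mul_comm, ← Nat.cast_mul,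
        Nat.factorial_mul_descFactorial hkr]
    have hY : ((2 * r - 1).descFactorial k : ℂ)
        = ((2 * r - 1).factorial : ℂ) / ((2 * r - 1 - k).factorial : ℂ) := by
      rw [eq_div_iff (fne _), mul_comm, ← Nat.cast_mul,
        Nat.factorial_mul_descFactorial (by omega : k ≤ 2 * r - 1)]
    have hC1 : (((s + k).choose k : ℕ) : ℂ)
        = ((s + k).factorial : ℂ) / ((k.factorial : ℂ) * (s.factorial : ℂ)) := by
      rw [eq_div_iff (by exact mul_ne_zero (fne _) (fne _))]
      have := Nat.choose_mul_factorial_mul_factorial (Nat.le_add_left k s)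
      have hsub : s + k - k = s := by omega
      rw [hsub] at this
      push_cast [← this]; ring
    have hC2 : ((((r - 1) + (r - k)).choose (r - k) : ℕ) : ℂ)
        = ((2 * r - 1 - k).factorial : ℂ) / (((r - k).factorial : ℂ) * ((r - 1).factorial : ℂ)) := by
      have hsub : (r - 1) + (r - k) = 2 * r - 1 - k := by omega
      rw [eq_div_iff (by exact mul_ne_zero (fne _) (fne _)), hsub]
      have := Nat.add_choose_mul_factorial_mul_factorial (r - 1) (r - k)
      rw [hsub] at this
      push_cast [← this]; ring
    have hks : ((k + s).factorial : ℂ) = ((s + k).factorial : ℂ) := by rw [Nat.add_comm]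
    push_cast [hC1, hC2]
    rw [hks, hX, hY]
    field_simp [fne]
  rw [Finset.sum_congr rfl hterm]
  -- sum the choose identity
  have hsum : ∑ k ∈ range (r + 1),
        (((s + k).choose k * (((r - 1) + (r - k)).choose (r - k)) : ℕ) : ℂ)
        * ((r.factorial : ℂ) * ((r - 1).factorial : ℂ) / ((2 * r - 1).factorial : ℂ))
      = (((s + 2 * r).choose r : ℕ) : ℂ)
        * ((r.factorial : ℂ) * ((r - 1).factorial : ℂ) / ((2 * r - 1).factorial : ℂ)) := by
    rw [← Finset.sum_mul, ← Nat.cast_sum]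
    have h := vand_aux s r (r - 1)
    have h2 : s + (r - 1) + r + 1 = s + 2 * r := by omega
    rw [h2] at h
    rw [h]
  rw [hsum]
  -- compute the right hand side
  have h2r : (1 : ℂ) + 2 * (r : ℕ) = 1 + ((2 * r : ℕ) : ℂ) := by push_cast; ring
  rw [h2r, hpoch (2 * r), hpoch r]
  have hCh : (((s + 2 * r).choose r : ℕ) : ℂ)
      = ((s + 2 * r).factorial : ℂ) / ((r.factorial : ℂ) * ((s + r).factorial : ℂ)) := by
    rw [eq_div_iff (by exact mul_ne_zero (fne _) (fne _))]
    have := Nat.choose_mul_factorial_mul_factorial (by omega : r ≤ s + 2 * r)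
    have hsub : s + 2 * r - r = s + r := by omega
    rw [hsub] at this
    push_cast [← this]; ring
  rw [hCh]
  have hf1 : ((2 * r).factorial : ℂ) = 2 * (r : ℂ) * ((2 * r - 1).factorial : ℂ) := by
    have h : (2 * r).factorial = 2 * r * (2 * r - 1).factorial := by
      conv_lhs => rw [show 2 * r = (2 * r - 1) + 1 by omega, Nat.factorial_succ]
      congr 1
      omega
    rw [h]
    push_cast
    ring
  have hf2 : (r.factorial : ℂ) = (r : ℂ) * ((r - 1).factorial : ℂ) := by
    have h : r.factorial = r * (r - 1).factorial := by
      conv_lhs => rw [show r = (r - 1) + 1 by omega, Nat.factorial_succ]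
      congr 1
      omega
    rw [h]
    push_cast
    ring
  have he1 : ((2 * r + s).factorial : ℂ) = ((s + 2 * r).factorial : ℂ) := by rw [Nat.add_comm]
  have he2 : ((r + s).factorial : ℂ) = ((s + r).factorial : ℂ) := by rw [Nat.add_comm]
  have hrne : ((r : ℕ) : ℂ) ≠ 0 := Nat.cast_ne_zero.mpr (by omega)
  rw [he1, he2, hf1, hf2]
  field_simp [fne]
end
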